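/- Let G = (V,E) be a graph with terminal set K ⊆ V, |K| > 1, and K an independent set. Construct G' by replacing each v ∈ K by two nonadjacent copies v', v'' each with neighborhood N_G(v), and a new vertex ṽ adjacent exactly to v' and v''; let K' be the set of new vertices ṽ. Then G has a cycle passing through all of K if and only if G' has a cycle passing through all of K'. Moreover, every vertex of K' has degree exactly 2 in G' and the vertices of K' are pairwise non-adjacent with pairwise disjoint neighborhoods. -/

import Mathlib

set_option maxHeartbeats 1000000


/-- `G` has a cycle passing through all vertices of `S`. -/
def HasCycleThrough {V : Type*} (G : SimpleGraph V) (S : Set V) : Prop :=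
  ∃ (a : V) (w : G.Walk a a), w.IsCycle ∧ ∀ v ∈ S, v ∈ w.support

/-- The symmetrized adjacency relation of the terminal gadget: every terminal `v ∈ K`
is replaced by two nonadjacent copies `v' = Sum.inl v` and `v'' = Sum.inr (Sum.inl ⟨v,_⟩)`,
each with the neighbourhood `N_G(v)`, together with a new terminal vertex
`ṽ = Sum.inr (Sum.inr ⟨v,_⟩)` adjacent exactly to `v'` and `v''`. -/
def gadgetRel {V : Type*} (G : SimpleGraph V) (K : Finset V) :
    (V ⊕ ({v // v ∈ K} ⊕ {v // v ∈ K})) → (V ⊕ ({v // v ∈ K} ⊕ {v // v ∈ K})) → Prop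
  | Sum.inl u, Sum.inl w => G.Adj u w
  | Sum.inl u, Sum.inr (Sum.inl v) => G.Adj u v.1
  | Sum.inr (Sum.inl v), Sum.inl u => G.Adj u v.1
  | Sum.inl u, Sum.inr (Sum.inr v) => u = v.1
  | Sum.inr (Sum.inr v), Sum.inl u => u = v.1
  | Sum.inr (Sum.inl v), Sum.inr (Sum.inr w) => v = w
  | Sum.inr (Sum.inr v), Sum.inr (Sum.inl w) => v = w
  | _, _ => False

/-- The gadget graph `G'` of the preprocessing step. -/
def gadget {V : Type*} (G : SimpleGraph V) (K : Finset V) :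
    SimpleGraph (V ⊕ ({v // v ∈ K} ⊕ {v // v ∈ K})) :=
  SimpleGraph.fromRel (gadgetRel G K)


section
variable {V : Type*} {G : SimpleGraph V} {K : Finset V}

lemma adj_inl_inl {u w : V} : (gadget G K).Adj (.inl u) (.inl w) ↔ G.Adj u w := by
  simp only [gadget, SimpleGraph.fromRel_adj, gadgetRel]
  constructor
  · rintro ⟨-, h | h⟩; exact h; exact h.symm
  · exact fun h => ⟨by simpa using h.ne, Or.inl h⟩

lemma adj_inl_mid {u : V} {v : {v // v ∈ K}} :
    (gadget G K).Adj (.inl u) (.inr (.inl v)) ↔ G.Adj u v.1 := by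
  simp only [gadget, SimpleGraph.fromRel_adj, gadgetRel]
  constructor
  · rintro ⟨-, h | h⟩ <;> exact h
  · exact fun h => ⟨by simp, Or.inl h⟩

lemma adj_inl_tld {u : V} {v : {v // v ∈ K}} :
    (gadget G K).Adj (.inl u) (.inr (.inr v)) ↔ u = v.1 := by
  simp only [gadget, SimpleGraph.fromRel_adj, gadgetRel]
  constructor
  · rintro ⟨-, h | h⟩ <;> exact h
  · exact fun h => ⟨by simp, Or.inl h⟩

lemma adj_mid_tld {v w : {v // v ∈ K}} :
    (gadget G K).Adj (.inr (.inl v)) (.inr (.inr w)) ↔ v = w := by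
  simp only [gadget, SimpleGraph.fromRel_adj, gadgetRel]
  constructor
  · rintro ⟨-, h | h⟩; exact h; exact h.symm
  · exact fun h => ⟨by simp, Or.inl h⟩

lemma not_adj_mid_mid {v w : {v // v ∈ K}} :
    ¬ (gadget G K).Adj (.inr (.inl v)) (.inr (.inl w)) := by
  simp [gadget, SimpleGraph.fromRel_adj, gadgetRel]

lemma not_adj_tld_tld {v w : {v // v ∈ K}} :
    ¬ (gadget G K).Adj (.inr (.inr v)) (.inr (.inr w)) := by
  simp [gadget, SimpleGraph.fromRel_adj, gadgetRel]

/-- classification of neighbours of `ṽ`. -/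
lemma adj_tld_iff {v : {v // v ∈ K}} {x} :
    (gadget G K).Adj (.inr (.inr v)) x ↔ x = .inl v.1 ∨ x = .inr (.inl v) := by
  constructor
  · intro h
    match x with
    | .inl u => exact Or.inl (by rw [(adj_inl_tld.mp h.symm)])
    | .inr (.inl w) => exact Or.inr (by rw [(adj_mid_tld.mp h.symm : w = v)])
    | .inr (.inr w) => exact absurd h not_adj_tld_tld
  · rintro (rfl | rfl)
    · exact (adj_inl_tld.mpr rfl).symm
    · exact (adj_mid_tld.mpr rfl).symm

/-- classification of neighbours of `v''`. -/
lemma adj_mid_iff {v : {v // v ∈ K}} {x} :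
    (gadget G K).Adj (.inr (.inl v)) x ↔
      (∃ u : V, x = .inl u ∧ G.Adj u v.1) ∨ x = .inr (.inr v) := by
  constructor
  · intro h
    match x with
    | .inl u => exact Or.inl ⟨u, rfl, adj_inl_mid.mp h.symm⟩
    | .inr (.inl w) => exact absurd h not_adj_mid_mid
    | .inr (.inr w) => exact Or.inr (by rw [(adj_mid_tld.mp h : v = w)])
  · rintro (⟨u, rfl, hu⟩ | rfl)
    · exact (adj_inl_mid.mpr hu).symm
    · exact adj_mid_tld.mpr rfl

/-- classification of neighbours of `inl u`. -/
lemma adj_inl_iff {u : V} {x} :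
    (gadget G K).Adj (.inl u) x ↔
      (∃ w : V, x = .inl w ∧ G.Adj u w) ∨
      (∃ v : {v // v ∈ K}, x = .inr (.inl v) ∧ G.Adj u v.1) ∨
      (∃ v : {v // v ∈ K}, x = .inr (.inr v) ∧ u = v.1) := by
  constructor
  · intro h
    match x with
    | .inl w => exact Or.inl ⟨w, rfl, adj_inl_inl.mp h⟩
    | .inr (.inl v) => exact Or.inr (Or.inl ⟨v, rfl, adj_inl_mid.mp h⟩)
    | .inr (.inr v) => exact Or.inr (Or.inr ⟨v, rfl, adj_inl_tld.mp h⟩)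
  · rintro (⟨w, rfl, hw⟩ | ⟨v, rfl, hv⟩ | ⟨v, rfl, hv⟩)
    · exact adj_inl_inl.mpr hw
    · exact adj_inl_mid.mpr hv
    · exact adj_inl_tld.mpr hv

lemma tld_neighborSet {v : {v // v ∈ K}} :
    (gadget G K).neighborSet (.inr (.inr v)) = {.inl v.1, .inr (.inl v)} := by
  ext x
  simp [SimpleGraph.mem_neighborSet, adj_tld_iff, Set.mem_insert_iff]

end

open SimpleGraph Walk

section helpers
variable {α : Type*} {G : SimpleGraph α}

lemma path_loop_eq_nil {a : α} {p : G.Walk a a} (hp : p.IsPath) : p = Walk.nil := by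
  cases p with
  | nil => rfl
  | cons h q =>
    exfalso
    have := hp.support_nodup
    rw [Walk.support_cons, List.nodup_cons] at this
    exact this.1 q.end_mem_support

lemma end_mem_tail_support {a : α} {c : G.Walk a a} (hn : ¬ c.Nil) :
    a ∈ c.support.tail := by
  cases c with
  | nil => simp at hn
  | cons h q => simpa using q.end_mem_support

lemma mem_support_iff_mem_tail {a : α} {c : G.Walk a a} (hn : ¬ c.Nil) (x : α) :
    x ∈ c.support ↔ x ∈ c.support.tail := by
  constructor
  · intro hx
    rw [Walk.mem_support_iff] at hx
    rcases hx with rfl | hx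
    · exact _root_.end_mem_tail_support hn
    · exact hx
  · intro hx
    rw [Walk.mem_support_iff]; exact Or.inr hx

lemma cycle_not_nil {a : α} {c : G.Walk a a} (hc : c.IsCycle) : ¬ c.Nil := by
  have := hc.three_le_length
  rw [Walk.nil_iff_length_eq]; omega

lemma mem_support_rotate_iff [DecidableEq α] {a b : α} {c : G.Walk a a} (hc : c.IsCycle)
    (hb : b ∈ c.support) (x : α) :
    x ∈ (c.rotate b hb).support ↔ x ∈ c.support := by
  rw [mem_support_iff_mem_tail (cycle_not_nil (hc.rotate hb)),
    mem_support_iff_mem_tail (cycle_not_nil hc),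
    (Walk.support_rotate c b hb).mem_iff]

/-- if an edge from the start of a path occurs in the path, it is the first edge. -/
lemma first_edge_of_path {a b c : α} (p : G.Walk a b) (hp : p.IsPath)
    (he : s(a, c) ∈ p.edges) : ∃ (h : G.Adj a c) (q : G.Walk c b), p = Walk.cons h q := by
  cases p with
  | nil => simp at he
  | cons h q =>
    rw [Walk.edges_cons, List.mem_cons] at he
    rcases he with he | he
    · rw [Sym2.eq_iff] at he
      rcases he with ⟨-, rfl⟩ | ⟨rfl, rfl⟩
      · exact ⟨h, q, rfl⟩
      · exact absurd h G.irrefl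
    · exfalso
      have : a ∈ q.support := q.fst_mem_support_of_mem_edges he
      have h2 := hp.support_nodup
      rw [Walk.support_cons, List.nodup_cons] at h2
      exact h2.1 this

/-- decompose a cycle as first edge plus a path. -/
lemma cycle_decomp {a : α} {c : G.Walk a a} (hc : c.IsCycle) :
    ∃ (x : α) (h : G.Adj a x) (p : G.Walk x a),
      c = Walk.cons h p ∧ p.IsPath ∧ s(a, x) ∉ p.edges := by
  obtain ⟨x, h, p, rfl⟩ := Walk.not_nil_iff.mp (cycle_not_nil hc)
  rw [Walk.cons_isCycle_iff] at hc
  exact ⟨x, h, p, rfl, hc.1, hc.2⟩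

end helpers

section main
variable {V : Type*} [DecidableEq V] {G : SimpleGraph V} {K : Finset V}

/-- the embedding of `G` into the gadget graph. -/
def homInl (G : SimpleGraph V) (K : Finset V) : G →g gadget G K :=
  ⟨Sum.inl, fun h => adj_inl_inl.mpr h⟩

lemma homInl_injective : Function.Injective (homInl G K) := fun _ _ h => Sum.inl.inj h

lemma forward_step (hind : ∀ v ∈ K, ∀ w ∈ K, ¬ G.Adj v w)
    {s : V ⊕ ({v // v ∈ K} ⊕ {v // v ∈ K})} {c : (gadget G K).Walk s s}
    (hc : c.IsCycle) (va : {v // v ∈ K})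
    (hin : (Sum.inl va.1 : V ⊕ ({v // v ∈ K} ⊕ {v // v ∈ K})) ∈ c.support)
    (htld : (Sum.inr (Sum.inr va) : V ⊕ ({v // v ∈ K} ⊕ {v // v ∈ K})) ∉ c.support)
    (hmid : (Sum.inr (Sum.inl va) : V ⊕ ({v // v ∈ K} ⊕ {v // v ∈ K})) ∉ c.support) :
    ∃ c' : (gadget G K).Walk (Sum.inr (Sum.inl va)) (Sum.inr (Sum.inl va)),
      c'.IsCycle ∧
      ∀ z, z ∈ c'.support ↔
        z = Sum.inr (Sum.inl va) ∨ z = Sum.inr (Sum.inr va) ∨ z ∈ c.support := by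
  classical
  set c1 := c.rotate _ hin with hc1def
  have hc1 : c1.IsCycle := hc.rotate hin
  have hmemrot : ∀ x, x ∈ c1.support ↔ x ∈ c.support :=
    mem_support_rotate_iff hc hin
  obtain ⟨x, h₁, p, hdec, hp, hedge⟩ := cycle_decomp hc1
  have hxne : (Sum.inl va.1 : V ⊕ ({v // v ∈ K} ⊕ {v // v ∈ K})) ≠ x := by
    rintro rfl
    have hnil := path_loop_eq_nil hp
    have h3 := hc1.three_le_length
    rw [hdec, hnil] at h3
    simp at h3
  obtain ⟨y, h₂, r, hrev⟩ := SimpleGraph.Walk.exists_eq_cons_of_ne hxne p.reverse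
  have hpeq : p = r.reverse.append (SimpleGraph.Walk.cons h₂.symm SimpleGraph.Walk.nil) := by
    have := congrArg SimpleGraph.Walk.reverse hrev
    rwa [SimpleGraph.Walk.reverse_reverse, SimpleGraph.Walk.reverse_cons] at this
  have hpsup : p.support = r.reverse.support ++ [Sum.inl va.1] := by
    rw [hpeq, SimpleGraph.Walk.support_append]; simp
  -- memberships
  have hsub : ∀ z, z ∈ r.reverse.support → z ∈ c.support := by
    intro z hz
    rw [← hmemrot, hdec, SimpleGraph.Walk.support_cons, List.mem_cons, hpsup]
    exact Or.inr (List.mem_append_left _ hz)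
  have hysup : y ∈ c.support := by
    apply hsub
    rw [SimpleGraph.Walk.support_reverse, List.mem_reverse]
    exact r.start_mem_support
  have hxsup : x ∈ c.support := by
    apply hsub
    rw [SimpleGraph.Walk.support_reverse, List.mem_reverse]
    exact r.end_mem_support
  -- classify y
  rcases adj_inl_iff.mp h₂ with ⟨w, hy, hw⟩ | ⟨v, hy, hv⟩ | ⟨v, hy, hv⟩
  · -- y = inl w, the good case
    subst hy
    -- nodup facts
    have hpnodup := hp.support_nodup
    rw [hpsup] at hpnodup
    have hrnodup : r.reverse.support.Nodup := (List.nodup_append'.mp hpnodup).1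
    have hinl_not : (Sum.inl va.1 : V ⊕ _) ∉ r.reverse.support := by
      intro hmem
      have := (List.nodup_append'.mp hpnodup).2.2
      exact this hmem (by simp)
    have htld_not : (Sum.inr (Sum.inr va) : V ⊕ _) ∉ r.reverse.support :=
      fun hmem => htld (hsub _ hmem)
    have hmid_not : (Sum.inr (Sum.inl va) : V ⊕ _) ∉ r.reverse.support :=
      fun hmem => hmid (hsub _ hmem)
    -- the new cycle
    refine ⟨SimpleGraph.Walk.cons (adj_mid_tld.mpr rfl)
      (SimpleGraph.Walk.cons ((adj_inl_tld.mpr rfl).symm)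
        (SimpleGraph.Walk.cons h₁
          (r.reverse.append
            (SimpleGraph.Walk.cons (adj_inl_mid.mpr hw.symm) SimpleGraph.Walk.nil)))), ?_, ?_⟩
    · rw [SimpleGraph.Walk.cons_isCycle_iff]
      constructor
      · apply SimpleGraph.Walk.IsPath.mk'
        simp only [SimpleGraph.Walk.support_cons, SimpleGraph.Walk.support_append,
          SimpleGraph.Walk.support_nil, List.tail_cons, List.nodup_cons]
        refine ⟨?_, ?_, ?_⟩
        · simp only [List.mem_cons, List.mem_append, List.mem_singleton]
          push_neg
          exact ⟨by simp, fun h => htld_not h, by simp⟩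
        · simp only [List.mem_append, List.mem_singleton]
          push_neg
          exact ⟨hinl_not, by simp⟩
        · rw [List.nodup_append']
          exact ⟨hrnodup, List.nodup_singleton _, by
            intro z hz hz'
            rw [List.mem_singleton] at hz'
            subst hz'
            exact hmid_not hz⟩
      · intro hmem
        simp only [SimpleGraph.Walk.edges_cons, SimpleGraph.Walk.edges_append,
          SimpleGraph.Walk.edges_nil, List.mem_cons, List.mem_append,
          List.mem_singleton, List.append_nil] at hmem
        rcases hmem with hmem | hmem | hmem | hmem
        · simp [Sym2.eq_iff] at hmem
        · simp [Sym2.eq_iff] at hmem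
        · exact htld_not
            (SimpleGraph.Walk.snd_mem_support_of_mem_edges _ hmem)
        · simp [Sym2.eq_iff] at hmem
    · intro z
      have hz : z ∈ c.support ↔ z = Sum.inl va.1 ∨ z ∈ r.reverse.support := by
        rw [← hmemrot, hdec, SimpleGraph.Walk.support_cons, List.mem_cons, hpsup,
          List.mem_append, List.mem_singleton]
        tauto
      simp only [SimpleGraph.Walk.support_cons, SimpleGraph.Walk.support_append,
        SimpleGraph.Walk.support_nil, List.tail_cons, List.mem_cons, List.mem_append,
        List.mem_singleton, hz]
      tauto
  · -- y = mid v : contradicts independence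
    exfalso
    exact hind va.1 va.2 v.1 v.2 hv
  · -- y = tld v : then v = va, contradicting htld
    exfalso
    have : v = va := Subtype.ext hv.symm
    subst this
    exact htld (hy ▸ hysup)

lemma forward_all (hind : ∀ v ∈ K, ∀ w ∈ K, ¬ G.Adj v w)
    (h : ∃ (a : V) (w : G.Walk a a), w.IsCycle ∧ ∀ v ∈ K, v ∈ w.support) :
    ∀ S : Finset V, S ⊆ K →
    ∃ (s : V ⊕ ({v // v ∈ K} ⊕ {v // v ∈ K})) (c : (gadget G K).Walk s s), c.IsCycle ∧
      (∀ v ∈ K, (Sum.inl v : V ⊕ ({v // v ∈ K} ⊕ {v // v ∈ K})) ∈ c.support) ∧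
      (∀ v : {v // v ∈ K}, v.1 ∈ S → Sum.inr (Sum.inr v) ∈ c.support) ∧
      (∀ v : {v // v ∈ K}, v.1 ∉ S →
        Sum.inr (Sum.inr v) ∉ c.support ∧ Sum.inr (Sum.inl v) ∉ c.support) := by
  intro S
  induction S using Finset.induction_on with
  | empty =>
    intro _
    obtain ⟨a, w, hw, hK⟩ := h
    refine ⟨homInl G K a, w.map (homInl G K), hw.map homInl_injective, ?_, ?_, ?_⟩
    · intro v hv
      rw [SimpleGraph.Walk.support_map]
      exact List.mem_map_of_mem (hK v hv)
    · intro v hv; simp at hv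
    · intro v _
      constructor <;>
      · rw [SimpleGraph.Walk.support_map]
        intro hmem
        obtain ⟨u, -, hu⟩ := List.mem_map.mp hmem
        simp [homInl] at hu
  | @insert a S haS ih =>
    intro hsub
    have haK : a ∈ K := hsub (Finset.mem_insert_self a S)
    obtain ⟨s, c, hc, hKmem, hSmem, hfresh⟩ :=
      ih (fun x hx => hsub (Finset.mem_insert_of_mem hx))
    obtain ⟨htf, hmf⟩ := hfresh ⟨a, haK⟩ haS
    obtain ⟨c', hc', hsupp⟩ := forward_step hind hc ⟨a, haK⟩ (hKmem a haK) htf hmf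
    refine ⟨_, c', hc', ?_, ?_, ?_⟩
    · intro v hv; rw [hsupp]; exact Or.inr (Or.inr (hKmem v hv))
    · intro v hv
      rw [hsupp]
      rcases Finset.mem_insert.mp hv with h | h
    
      · have : v = ⟨a, haK⟩ := Subtype.ext h
        rw [this]
        exact Or.inr (Or.inl rfl)
      · exact Or.inr (Or.inr (hSmem v h))
    · intro v hv
      have h1 : v.1 ∉ S := fun h => hv (Finset.mem_insert_of_mem h)
      have hva : v ≠ ⟨a, haK⟩ := by
        rintro rfl; exact hv (Finset.mem_insert_self _ _)
      obtain ⟨t1, t2⟩ := hfresh v h1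
      constructor
      · rw [hsupp]
        rintro (h | h | h)
        · simp at h
        · exact hva (by simpa using h)
        · exact t1 h
      · rw [hsupp]
        rintro (h | h | h)
        · exact hva (by simpa using h)
        · simp at h
        · exact t2 h

lemma pull {x y : V ⊕ ({v // v ∈ K} ⊕ {v // v ∈ K})} (w : (gadget G K).Walk x y) :
    ∀ {a b : V} (hx : x = Sum.inl a) (hy : y = Sum.inl b),
    (∀ z ∈ w.support, ∃ u : V, z = Sum.inl u) →
    ∃ w' : G.Walk a b, w'.map (homInl G K) = w.copy hx hy := by
  induction w with
  | nil =>
    intro a b hx hy _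
    have hab : a = b := by rw [hx] at hy; exact Sum.inl.inj hy
    subst hab
    subst hx
    exact ⟨SimpleGraph.Walk.nil, rfl⟩
  | @cons u v y h q ih =>
    intro a b hx hy hall
    subst hx
    subst hy
    obtain ⟨u', rfl⟩ : ∃ u', v = Sum.inl u' := hall v (by simp)
    have hadj : G.Adj a u' := adj_inl_inl.mp h
    obtain ⟨w', hw'⟩ := ih rfl rfl (fun z hz => hall z (by simp [hz]))
    refine ⟨SimpleGraph.Walk.cons hadj w', ?_⟩
    rw [SimpleGraph.Walk.map_cons]
    rw [SimpleGraph.Walk.copy_rfl_rfl] at hw' ⊢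
    exact congrArg _ hw'

lemma backward_step (hind : ∀ v ∈ K, ∀ w ∈ K, ¬ G.Adj v w)
    (w : {v // v ∈ K})
    {c : (gadget G K).Walk (Sum.inr (Sum.inr w)) (Sum.inr (Sum.inr w))}
    (hc : c.IsCycle)
    (hother : ∃ v0 : {v // v ∈ K}, v0 ≠ w ∧
      ((Sum.inr (Sum.inr v0) : V ⊕ ({v // v ∈ K} ⊕ {v // v ∈ K})) ∈ c.support ∨
       (Sum.inl v0.1 : V ⊕ ({v // v ∈ K} ⊕ {v // v ∈ K})) ∈ c.support)) :
    ∃ c' : (gadget G K).Walk (Sum.inl w.1) (Sum.inl w.1),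
      c'.IsCycle ∧
      (∀ z, z ∈ c.support ↔
        z = Sum.inr (Sum.inr w) ∨ z = Sum.inr (Sum.inl w) ∨ z ∈ c'.support) ∧
      (Sum.inr (Sum.inr w) : V ⊕ ({v // v ∈ K} ⊕ {v // v ∈ K})) ∉ c'.support ∧
      (Sum.inr (Sum.inl w) : V ⊕ ({v // v ∈ K} ⊕ {v // v ∈ K})) ∉ c'.support := by
  classical
  obtain ⟨x, h₁, p, hdec, hp, hedge⟩ := cycle_decomp hc
  have hxcl := adj_tld_iff.mp h₁
  have hxne : (Sum.inr (Sum.inr w) : V ⊕ ({v // v ∈ K} ⊕ {v // v ∈ K})) ≠ x := by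
    rcases hxcl with rfl | rfl <;> simp
  obtain ⟨y, h₂, r, hrev⟩ := SimpleGraph.Walk.exists_eq_cons_of_ne hxne p.reverse
  have hycl := adj_tld_iff.mp h₂
  have hpeq : p = r.reverse.append (SimpleGraph.Walk.cons h₂.symm SimpleGraph.Walk.nil) := by
    have := congrArg SimpleGraph.Walk.reverse hrev
    rwa [SimpleGraph.Walk.reverse_reverse, SimpleGraph.Walk.reverse_cons] at this
  have hpsup : p.support = r.reverse.support ++ [Sum.inr (Sum.inr w)] := by
    rw [hpeq, SimpleGraph.Walk.support_append]; simp
  have hpedges : p.edges = r.reverse.edges ++ [s(y, Sum.inr (Sum.inr w))] := by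
    rw [hpeq, SimpleGraph.Walk.edges_append]; simp
  have hpnodup := hp.support_nodup
  rw [hpsup] at hpnodup
  have htld_not : (Sum.inr (Sum.inr w) : V ⊕ _) ∉ r.reverse.support := by
    intro hmem
    exact (List.nodup_append'.mp hpnodup).2.2 hmem (by simp)
  have hrnodup : r.reverse.support.Nodup := (List.nodup_append.mp hpnodup).1
  have hxyne : x ≠ y := by
    rintro rfl
    apply hedge
    rw [hpedges]
    refine List.mem_append_right _ ?_
    rw [List.mem_singleton, Sym2.eq_swap]
  have hcsup : ∀ z', z' ∈ c.support ↔
      z' = Sum.inr (Sum.inr w) ∨ z' ∈ r.reverse.support := by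
    intro z'
    rw [hdec, SimpleGraph.Walk.support_cons, List.mem_cons, hpsup, List.mem_append,
      List.mem_singleton]
    tauto
  have hrpath : r.IsPath := by
    have := hp.reverse
    rw [hrev] at this
    exact this.of_cons
  rcases hxcl with rfl | rfl
  · -- case B : x = inl w.1, so y = mid w
    have hyeq : y = Sum.inr (Sum.inl w) := by
      rcases hycl with rfl | rfl
      · exact absurd rfl hxyne
      · rfl
    subst hyeq
    obtain ⟨z, h₃, r', hr⟩ := SimpleGraph.Walk.exists_eq_cons_of_ne (Ne.symm hxyne) r
    have hr'path : r'.IsPath := by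
      rw [hr] at hrpath; exact hrpath.of_cons
    have hrsup_eq : r.support = Sum.inr (Sum.inl w) :: r'.support := by
      rw [hr, SimpleGraph.Walk.support_cons]
    have hmid_not_r' : (Sum.inr (Sum.inl w) : V ⊕ _) ∉ r'.support := by
      have := hrpath.support_nodup
      rw [hrsup_eq, List.nodup_cons] at this
      exact this.1
    have hmem_rrev : ∀ z', z' ∈ r.reverse.support ↔ z' ∈ r.support := by
      intro z'
      rw [SimpleGraph.Walk.support_reverse, List.mem_reverse]
    have htld_not_r' : (Sum.inr (Sum.inr w) : V ⊕ _) ∉ r'.support := by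
      intro hmem
      apply htld_not
      rw [hmem_rrev, hrsup_eq]
      exact List.mem_cons_of_mem _ hmem
    obtain ⟨u, rfl, hu⟩ : ∃ u : V, z = Sum.inl u ∧ G.Adj u w.1 := by
      rcases adj_mid_iff.mp h₃ with ⟨u, rfl, hu⟩ | rfl
      · exact ⟨u, rfl, hu⟩
      · exact absurd r'.start_mem_support htld_not_r'
    have hcsup2 : ∀ z', z' ∈ c.support ↔
        z' = Sum.inr (Sum.inr w) ∨ z' = Sum.inr (Sum.inl w) ∨ z' ∈ r'.support := by
      intro z'
      rw [hcsup, hmem_rrev, hrsup_eq, List.mem_cons]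
    refine ⟨SimpleGraph.Walk.cons (adj_inl_inl.mpr hu.symm) r', ?_, ?_, ?_, ?_⟩
    · rw [SimpleGraph.Walk.cons_isCycle_iff]
      refine ⟨hr'path, ?_⟩
      intro hmem
      rw [Sym2.eq_swap] at hmem
      obtain ⟨hadj, q, hq⟩ := first_edge_of_path r' hr'path hmem
      have hqnil : q = SimpleGraph.Walk.nil := by
        apply path_loop_eq_nil
        rw [hq] at hr'path; exact hr'path.of_cons
      obtain ⟨v0, hv0ne, hv0⟩ := hother
      have hr'sup : r'.support = [Sum.inl u, Sum.inl w.1] := by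
        rw [hq, hqnil]; simp
      rcases hv0 with hv0 | hv0
      · rw [hcsup2, hr'sup] at hv0
        rcases hv0 with hv0 | hv0 | hv0 <;> simp at hv0
        exact hv0ne hv0
      · rw [hcsup2, hr'sup] at hv0
        rcases hv0 with hv0 | hv0 | hv0
        · simp at hv0
        · simp at hv0
        · rcases List.mem_cons.mp hv0 with hv0 | hv0
          · have : v0.1 = u := by simpa using hv0
            exact hind v0.1 v0.2 w.1 w.2 (this ▸ hu)
          · have : v0.1 = w.1 := by simpa using List.mem_singleton.mp hv0
            exact hv0ne (Subtype.ext this)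
    · intro z'
      rw [hcsup2, SimpleGraph.Walk.support_cons, List.mem_cons]
      have hend : (Sum.inl w.1 : V ⊕ _) ∈ r'.support := r'.end_mem_support
      constructor
      · rintro (h | h | h)
        · tauto
        · tauto
        · tauto
      · rintro (h | h | (h | h))
        · tauto
        · tauto
        · subst h; tauto
        · tauto
    · rw [SimpleGraph.Walk.support_cons, List.mem_cons]
      push_neg
      exact ⟨by simp, htld_not_r'⟩
    · rw [SimpleGraph.Walk.support_cons, List.mem_cons]
      push_neg
      exact ⟨by simp, hmid_not_r'⟩
  · -- case A : x = mid w, so y = inl w.1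
    have hyeq : y = Sum.inl w.1 := by
      rcases hycl with rfl | rfl
      · rfl
      · exact absurd rfl hxyne
    subst hyeq
    obtain ⟨z, h₃, r'', hrr⟩ := SimpleGraph.Walk.exists_eq_cons_of_ne hxyne r.reverse
    have hrrpath : r.reverse.IsPath := hrpath.reverse
    have hr''path : r''.IsPath := by
      rw [hrr] at hrrpath; exact hrrpath.of_cons
    have hrrsup_eq : r.reverse.support = Sum.inr (Sum.inl w) :: r''.support := by
      rw [hrr, SimpleGraph.Walk.support_cons]
    have hmid_not_r'' : (Sum.inr (Sum.inl w) : V ⊕ _) ∉ r''.support := by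
      have := hrnodup
      rw [hrrsup_eq, List.nodup_cons] at this
      exact this.1
    have htld_not_r'' : (Sum.inr (Sum.inr w) : V ⊕ _) ∉ r''.support := by
      intro hmem
      apply htld_not
      rw [hrrsup_eq]
      exact List.mem_cons_of_mem _ hmem
    obtain ⟨u, rfl, hu⟩ : ∃ u : V, z = Sum.inl u ∧ G.Adj u w.1 := by
      rcases adj_mid_iff.mp h₃ with ⟨u, rfl, hu⟩ | rfl
      · exact ⟨u, rfl, hu⟩
      · exact absurd r''.start_mem_support htld_not_r''
    have hcsup2 : ∀ z', z' ∈ c.support ↔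
        z' = Sum.inr (Sum.inr w) ∨ z' = Sum.inr (Sum.inl w) ∨ z' ∈ r''.support := by
      intro z'
      rw [hcsup, hrrsup_eq, List.mem_cons]
    refine ⟨SimpleGraph.Walk.cons (adj_inl_inl.mpr hu.symm) r'', ?_, ?_, ?_, ?_⟩
    · rw [SimpleGraph.Walk.cons_isCycle_iff]
      refine ⟨hr''path, ?_⟩
      intro hmem
      rw [Sym2.eq_swap] at hmem
      obtain ⟨hadj, q, hq⟩ := first_edge_of_path r'' hr''path hmem
      have hqnil : q = SimpleGraph.Walk.nil := by
        apply path_loop_eq_nil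
        rw [hq] at hr''path; exact hr''path.of_cons
      obtain ⟨v0, hv0ne, hv0⟩ := hother
      have hr''sup : r''.support = [Sum.inl u, Sum.inl w.1] := by
        rw [hq, hqnil]; simp
      rcases hv0 with hv0 | hv0
      · rw [hcsup2, hr''sup] at hv0
        rcases hv0 with hv0 | hv0 | hv0 <;> simp at hv0
        exact hv0ne hv0
      · rw [hcsup2, hr''sup] at hv0
        rcases hv0 with hv0 | hv0 | hv0
        · simp at hv0
        · simp at hv0
        · rcases List.mem_cons.mp hv0 with hv0 | hv0
          · have : v0.1 = u := by simpa using hv0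
            exact hind v0.1 v0.2 w.1 w.2 (this ▸ hu)
          · have : v0.1 = w.1 := by simpa using List.mem_singleton.mp hv0
            exact hv0ne (Subtype.ext this)
    · intro z'
      rw [hcsup2, SimpleGraph.Walk.support_cons, List.mem_cons]
      have hend : (Sum.inl w.1 : V ⊕ _) ∈ r''.support := r''.end_mem_support
      constructor
      · rintro (h | h | h)
        · tauto
        · tauto
        · tauto
      · rintro (h | h | (h | h))
        · tauto
        · tauto
        · subst h; tauto
        · tauto
    · rw [SimpleGraph.Walk.support_cons, List.mem_cons]
      push_neg
      exact ⟨by simp, htld_not_r''⟩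
    · rw [SimpleGraph.Walk.support_cons, List.mem_cons]
      push_neg
      exact ⟨by simp, hmid_not_r''⟩

lemma backward_all (hcard : 1 < K.card) (hind : ∀ v ∈ K, ∀ w ∈ K, ¬ G.Adj v w)
    (h : ∃ (s : V ⊕ ({v // v ∈ K} ⊕ {v // v ∈ K})) (c : (gadget G K).Walk s s),
      c.IsCycle ∧ ∀ v : {v // v ∈ K}, Sum.inr (Sum.inr v) ∈ c.support) :
    ∀ S : Finset V, S ⊆ K →
    ∃ (s : V ⊕ ({v // v ∈ K} ⊕ {v // v ∈ K})) (c : (gadget G K).Walk s s), c.IsCycle ∧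
      (∀ v : {v // v ∈ K}, v.1 ∉ S → Sum.inr (Sum.inr v) ∈ c.support) ∧
      (∀ v : {v // v ∈ K}, v.1 ∈ S →
        (Sum.inl v.1 : V ⊕ ({v // v ∈ K} ⊕ {v // v ∈ K})) ∈ c.support ∧
        Sum.inr (Sum.inr v) ∉ c.support ∧ Sum.inr (Sum.inl v) ∉ c.support) := by
  intro S
  induction S using Finset.induction_on with
  | empty =>
    intro _
    obtain ⟨s, c, hc, hK⟩ := h
    exact ⟨s, c, hc, fun v _ => hK v, fun v hv => absurd hv (Finset.notMem_empty _)⟩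
  | @insert b S hbS ih =>
    intro hsub
    have hbK : b ∈ K := hsub (Finset.mem_insert_self b S)
    obtain ⟨s, c, hc, hun, hproc⟩ :=
      ih (fun x hx => hsub (Finset.mem_insert_of_mem hx))
    have htb : (Sum.inr (Sum.inr (⟨b, hbK⟩ : {v // v ∈ K})) : V ⊕ _) ∈ c.support :=
      hun ⟨b, hbK⟩ hbS
    set c1 := c.rotate _ htb with hc1def
    have hc1 : c1.IsCycle := hc.rotate htb
    have hmemrot : ∀ x, x ∈ c1.support ↔ x ∈ c.support :=
      mem_support_rotate_iff hc htb
    have hother : ∃ v0 : {v // v ∈ K}, v0 ≠ ⟨b, hbK⟩ ∧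
        ((Sum.inr (Sum.inr v0) : V ⊕ ({v // v ∈ K} ⊕ {v // v ∈ K})) ∈ c1.support ∨
         (Sum.inl v0.1 : V ⊕ ({v // v ∈ K} ⊕ {v // v ∈ K})) ∈ c1.support) := by
      obtain ⟨b0, hb0K, hb0ne⟩ := Finset.exists_mem_ne hcard b
      refine ⟨⟨b0, hb0K⟩, by simp [hb0ne], ?_⟩
      by_cases hb0S : b0 ∈ S
      · exact Or.inr ((hmemrot _).mpr (hproc ⟨b0, hb0K⟩ hb0S).1)
      · exact Or.inl ((hmemrot _).mpr (hun ⟨b0, hb0K⟩ hb0S))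
    obtain ⟨c', hc', hrel, htnot, hmnot⟩ := backward_step hind ⟨b, hbK⟩ hc1 hother
    refine ⟨_, c', hc', ?_, ?_⟩
    · intro v hv
      have hvb : v ≠ ⟨b, hbK⟩ := by
        rintro rfl; exact hv (Finset.mem_insert_self _ _)
      have h1 : v.1 ∉ S := fun hmem => hv (Finset.mem_insert_of_mem hmem)
      have := (hrel _).mp ((hmemrot _).mpr (hun v h1))
      rcases this with h | h | h
      · exact absurd (by simpa using h) hvb
      · simp at h
      · exact h
    · intro v hv
      rcases Finset.mem_insert.mp hv with hvb | hvS
      · have hveq : v = ⟨b, hbK⟩ := Subtype.ext hvb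
        subst hveq
        exact ⟨SimpleGraph.Walk.start_mem_support c', htnot, hmnot⟩
      · obtain ⟨p1, p2, p3⟩ := hproc v hvS
        have hvb : v ≠ ⟨b, hbK⟩ := by
          rintro rfl; exact hbS hvS
        refine ⟨?_, ?_, ?_⟩
        · have := (hrel _).mp ((hmemrot _).mpr p1)
          rcases this with h | h | h
          · simp at h
          · simp at h
          · exact h
        · intro hmem
          have : Sum.inr (Sum.inr v) ∈ c1.support := (hrel _).mpr (Or.inr (Or.inr hmem))
          exact p2 ((hmemrot _).mp this)
        · intro hmem
          have : Sum.inr (Sum.inl v) ∈ c1.support := (hrel _).mpr (Or.inr (Or.inr hmem))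
          exact p3 ((hmemrot _).mp this)
end main

/-- Preprocessing of `K`-cycle: if `K` is an independent set with `|K| > 1`, then `G`
has a cycle through all of `K` iff the gadget graph `G'` has a cycle through all of the
new terminals `K' = {ṽ : v ∈ K}`; moreover every new terminal has degree exactly two in
`G'`, and the new terminals are pairwise non-adjacent with pairwise disjoint
neighbourhoods. -/
theorem kcycle_degree_two_reduction {V : Type*} [DecidableEq V] (G : SimpleGraph V)
    (K : Finset V) (hcard : 1 < K.card)
    (hind : ∀ v ∈ K, ∀ w ∈ K, ¬ G.Adj v w) :
    (HasCycleThrough G (K : Set V) ↔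
      HasCycleThrough (gadget G K)
        {x | ∃ v : {v // v ∈ K}, x = Sum.inr (Sum.inr v)}) ∧
    (∀ v : {v // v ∈ K},
      ((gadget G K).neighborSet (Sum.inr (Sum.inr v))).ncard = 2) ∧
    (∀ v w : {v // v ∈ K},
      ¬ (gadget G K).Adj (Sum.inr (Sum.inr v)) (Sum.inr (Sum.inr w))) ∧
    (∀ v w : {v // v ∈ K}, v ≠ w →
      Disjoint ((gadget G K).neighborSet (Sum.inr (Sum.inr v)))
        ((gadget G K).neighborSet (Sum.inr (Sum.inr w)))) := by

  classical
  refine ⟨?_, ?_, ?_, ?_⟩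
  · constructor
    · rintro ⟨a, w, hw, hK⟩
      have h : ∃ (a : V) (w : G.Walk a a), w.IsCycle ∧ ∀ v ∈ K, v ∈ w.support :=
        ⟨a, w, hw, fun v hv => hK v (Finset.mem_coe.mpr hv)⟩
      obtain ⟨s, c, hc, -, hS, -⟩ := forward_all hind h K (subset_refl K)
      exact ⟨s, c, hc, by rintro x ⟨v, rfl⟩; exact hS v v.2⟩
    · rintro ⟨s, c, hc, hK'⟩
      have h : ∃ (s : V ⊕ ({v // v ∈ K} ⊕ {v // v ∈ K})) (c : (gadget G K).Walk s s),
          c.IsCycle ∧ ∀ v : {v // v ∈ K}, Sum.inr (Sum.inr v) ∈ c.support :=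
        ⟨s, c, hc, fun v => hK' _ ⟨v, rfl⟩⟩
      obtain ⟨s2, c2, hc2, -, hproc⟩ := backward_all hcard hind h K (subset_refl K)
      have hall : ∀ z ∈ c2.support, ∃ u : V, z = Sum.inl u := by
        intro z hz
        match z with
        | Sum.inl u => exact ⟨u, rfl⟩
        | Sum.inr (Sum.inl v) => exact absurd hz (hproc v v.2).2.2
        | Sum.inr (Sum.inr v) => exact absurd hz (hproc v v.2).2.1
      obtain ⟨a, hs⟩ := hall s2 c2.start_mem_support
      obtain ⟨w', hw'⟩ := pull c2 hs hs hall
      have hcyc : w'.IsCycle := by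
        have h1 : (w'.map (homInl G K)).IsCycle := by
          rw [hw']
          exact (SimpleGraph.Walk.isCycle_copy c2 hs).mpr hc2
        exact (SimpleGraph.Walk.map_isCycle_iff_of_injective homInl_injective).mp h1
      refine ⟨a, w', hcyc, ?_⟩
      intro v hv
      have hvK : v ∈ K := hv
      have hmem : (Sum.inl v : V ⊕ ({v // v ∈ K} ⊕ {v // v ∈ K})) ∈
          (c2.copy hs hs).support := by
        rw [SimpleGraph.Walk.support_copy]
        exact (hproc ⟨v, hvK⟩ hvK).1
      rw [← hw'] at hmem
      have hmem2 : Sum.inl v ∈ w'.support.map (homInl G K) := by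
        rw [← SimpleGraph.Walk.support_map]; exact hmem
      obtain ⟨u, hu, heq⟩ := List.mem_map.mp hmem2
      have : u = v := Sum.inl.inj heq
      exact this ▸ hu
  · intro v
    rw [tld_neighborSet, Set.ncard_pair (by simp)]
  · intro v w
    exact not_adj_tld_tld
  · intro v w hvw
    have hne : v.1 ≠ w.1 := fun h => hvw (Subtype.ext h)
    rw [tld_neighborSet, tld_neighborSet, Set.disjoint_left]
    intro x hx hx2
    simp only [Set.mem_insert_iff, Set.mem_singleton_iff] at hx hx2
    rcases hx with rfl | rfl <;> rcases hx2 with h | h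
    · exact hne (Sum.inl.inj h)
    · simp at h
    · simp at h
    · exact hvw (by simpa using h)
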